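/- arXiv:2209.13347 — 5 statements merged into one kernel-verified Lean document; each statement's English description precedes it below -/
import Mathlib

section
/- A field admits a semiordering if and only if it is formally real (admits a field ordering). -/
section Aux

variable {F : Type*} [Field F]

/-- A preordering predicate on a set of a field. -/
def IsPreordering (P : Set F) : Prop :=
  (∀ x ∈ P, ∀ y ∈ P, x + y ∈ P) ∧ (∀ x ∈ P, ∀ y ∈ P, x * y ∈ P) ∧
  (∀ x : F, x ^ 2 ∈ P) ∧ (-1 : F) ∉ P

lemma isSumSq_mul_aux (a : F) {y : F} (hy : IsSumSq y) : IsSumSq (a * a * y) := by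
  induction hy with
  | zero => simpa using IsSumSq.zero
  | @sq_add b T pT ih =>
    have : a * a * (b * b + T) = (a * b) * (a * b) + a * a * T := by ring
    rw [this]
    exact IsSumSq.sq_add _ ih

lemma isSumSq_mul {x y : F} (hx : IsSumSq x) (hy : IsSumSq y) : IsSumSq (x * y) := by
  induction hx with
  | zero => simpa using IsSumSq.zero
  | @sq_add a S pS ih =>
    have : (a * a + S) * y = a * a * y + S * y := by ring
    rw [this]
    exact (isSumSq_mul_aux a hy).add ih

/-- A maximal preordering is total: for all a, a ∈ M or -a ∈ M. -/
lemma maximal_total {M : Set F} (hM : Maximal IsPreordering M) (a : F) :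
    a ∈ M ∨ -a ∈ M := by
  by_cases ha : a ∈ M
  · exact Or.inl ha
  right
  obtain ⟨⟨hadd, hmul, hsq, hn1⟩, hmax⟩ := hM
  have h0M : (0 : F) ∈ M := by simpa using hsq 0
  have h1M : (1 : F) ∈ M := by simpa using hsq 1
  set P' : Set F := {x | ∃ p ∈ M, ∃ q ∈ M, x = p + (-a) * q} with hP'
  have hMP' : M ⊆ P' := fun p hp => ⟨p, hp, 0, h0M, by ring⟩
  have hgood : IsPreordering P' := by
    refine ⟨?_, ?_, ?_, ?_⟩
    · rintro x ⟨p, hp, q, hq, rfl⟩ y ⟨p', hp', q', hq', rfl⟩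
      exact ⟨p + p', hadd _ hp _ hp', q + q', hadd _ hq _ hq', by ring⟩
    · rintro x ⟨p, hp, q, hq, rfl⟩ y ⟨p', hp', q', hq', rfl⟩
      refine ⟨p * p' + a ^ 2 * (q * q'), ?_, p * q' + p' * q, ?_, by ring⟩
      · exact hadd _ (hmul _ hp _ hp') _ (hmul _ (hsq a) _ (hmul _ hq _ hq'))
      · exact hadd _ (hmul _ hp _ hq') _ (hmul _ hp' _ hq)
    · intro x
      exact hMP' (hsq x)
    · rintro ⟨p, hp, q, hq, h⟩
      by_cases hq0 : q = 0
      · rw [hq0] at h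
        simp at h
        exact hn1 (h ▸ hp)
      · apply ha
        have haq : a * q = p + 1 := by linear_combination h
        have : a = (p + 1) * q * (q⁻¹) ^ 2 := by
          field_simp
          linear_combination haq
        rw [this]
        exact hmul _ (hmul _ (hadd _ hp _ h1M) _ hq) _ (hsq _)
  have := hmax hgood hMP'
  exact this ⟨0, h0M, 1, h1M, by ring⟩

end Aux

/-- A field admits a semiordering if and only if it is formally real
(admits a field ordering). -/
theorem stmt11 (F : Type*) [Field F] :
    (∃ le : F → F → Prop,
      (∀ a, le a a) ∧
      (∀ a b c, le a b → le b c → le a c) ∧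
      (∀ a b, le a b → le b a → a = b) ∧
      (∀ a b, le a b ∨ le b a) ∧
      (∀ a b c, le a b → le (a + c) (b + c)) ∧
      le 0 1 ∧
      (∀ a b, le 0 a → le 0 (a * b ^ 2))) ↔
    (∃ le : F → F → Prop,
      (∀ a, le a a) ∧
      (∀ a b c, le a b → le b c → le a c) ∧
      (∀ a b, le a b → le b a → a = b) ∧
      (∀ a b, le a b ∨ le b a) ∧
      (∀ a b c, le a b → le (a + c) (b + c)) ∧
      (∀ a b, le 0 a → le 0 b → le 0 (a * b))) := by
  constructor
  · rintro ⟨le, hrefl, htrans, hanti, htot, haddc, h01, hsqc⟩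
    -- every sum of squares is nonneg under the semiordering
    have hnonneg : ∀ x : F, IsSumSq x → le 0 x := by
      intro x hx
      induction hx with
      | zero => exact hrefl 0
      | @sq_add a S pS ih =>
        have h1 : le 0 (a * a) := by
          have := hsqc 1 a h01
          simpa [sq] using this
        have h2 : le S (a * a + S) := by
          have := haddc 0 (a * a) S h1
          simpa [add_comm] using this
        exact htrans _ _ _ ih h2
    have hn1 : ¬ IsSumSq (-1 : F) := by
      intro h
      have h0n1 : le 0 (-1) := hnonneg _ h
      have h10 : le 1 0 := by
        have := haddc 0 (-1) 1 h0n1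
        simpa using this
      exact one_ne_zero (hanti 1 0 h10 h01)
    have hbase : IsPreordering {x : F | IsSumSq x} :=
      ⟨fun x hx y hy => hx.add hy, fun x hx y hy => isSumSq_mul hx hy,
        fun x => by simpa [sq] using IsSumSq.sq_add x .zero, hn1⟩
    -- Zorn
    obtain ⟨M, -, hM⟩ := zorn_subset_nonempty {P : Set F | IsPreordering P}
      (fun c hc hchain hne => by
        refine ⟨⋃₀ c, ⟨?_, ?_, ?_, ?_⟩, fun s hs => Set.subset_sUnion_of_mem hs⟩
        · rintro x ⟨A, hA, hxA⟩ y ⟨B, hB, hyB⟩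
          rcases hchain.total hA hB with h | h
          · exact ⟨B, hB, (hc hB).1 _ (h hxA) _ hyB⟩
          · exact ⟨A, hA, (hc hA).1 _ hxA _ (h hyB)⟩
        · rintro x ⟨A, hA, hxA⟩ y ⟨B, hB, hyB⟩
          rcases hchain.total hA hB with h | h
          · exact ⟨B, hB, (hc hB).2.1 _ (h hxA) _ hyB⟩
          · exact ⟨A, hA, (hc hA).2.1 _ hxA _ (h hyB)⟩
        · intro x
          obtain ⟨A, hA⟩ := hne
          exact ⟨A, hA, (hc hA).2.2.1 x⟩
        · rintro ⟨A, hA, hxA⟩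
          exact (hc hA).2.2.2 hxA)
      {x : F | IsSumSq x} hbase
    obtain ⟨⟨hadd, hmul, hsq, hn1M⟩, -⟩ := id hM
    have h0M : (0 : F) ∈ M := by simpa using hsq 0
    have htotM : ∀ a : F, a ∈ M ∨ -a ∈ M := maximal_total hM
    -- key: a ∈ M and -a ∈ M → a = 0
    have hkey : ∀ a : F, a ∈ M → -a ∈ M → a = 0 := by
      intro a haM hnaM
      by_contra ha0
      apply hn1M
      have : (-1 : F) = a * (-a) * (a⁻¹) ^ 2 := by field_simp
      rw [this]
      exact hmul _ (hmul _ haM _ hnaM) _ (hsq _)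
    refine ⟨fun x y => y - x ∈ M, ?_, ?_, ?_, ?_, ?_, fun a b ha hb => ?_⟩
    · intro a; simpa using h0M
    · intro a b c hab hbc
      have h := hadd _ hab _ hbc
      have e : b - a + (c - b) = c - a := by ring
      rwa [e] at h
    · intro a b hab hba
      have : b - a = 0 := hkey _ hab (by simpa using hba)
      exact (sub_eq_zero.mp this).symm
    · intro a b
      rcases htotM (b - a) with h | h
      · exact Or.inl h
      · exact Or.inr (by simpa using h)
    · intro a b c h
      simpa using h
    · have ha' : a ∈ M := by simpa using ha
      have hb' : b ∈ M := by simpa using hb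
      simpa using hmul _ ha' _ hb'
  · rintro ⟨le, hrefl, htrans, hanti, htot, haddc, hmulc⟩
    have hsqnn : ∀ b : F, le 0 (b ^ 2) := by
      intro b
      rcases htot 0 b with h | h
      · simpa [sq] using hmulc b b h h
      · have h' : le 0 (-b) := by simpa using haddc b 0 (-b) h
        simpa [sq] using hmulc (-b) (-b) h' h'
    have h01 : le 0 1 := by simpa using hsqnn 1
    exact ⟨le, hrefl, htrans, hanti, htot, haddc, h01,
      fun a b ha => hmulc a (b ^ 2) ha (hsqnn b)⟩
end

section
/- Every pre-semicone P₀ of a formally real field F can be extended to a set P ⊇ P₀ such that P or -P is a semicone of F. -/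
/-- Every pre-semicone of a formally real field extends to a set `P` such that
`P` or `-P` is a semicone. -/
theorem stmt12 (F : Type*) [Field F]
    (hreal : ∃ le : F → F → Prop,
      (∀ a, le a a) ∧
      (∀ a b c, le a b → le b c → le a c) ∧
      (∀ a b, le a b → le b a → a = b) ∧
      (∀ a b, le a b ∨ le b a) ∧
      (∀ a b c, le a b → le (a + c) (b + c)) ∧
      (∀ a b, le 0 a → le 0 b → le 0 (a * b)))
    (P₀ : Set F)
    (hadd : ∀ a ∈ P₀, ∀ b ∈ P₀, a + b ∈ P₀)
    (hsq : ∀ a ∈ P₀, ∀ b : F, b ^ 2 * a ∈ P₀)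
    (hanti : P₀ ∩ (-P₀) = {0}) :
    ∃ P : Set F, P₀ ⊆ P ∧
      ((∀ a ∈ P, ∀ b ∈ P, a + b ∈ P) ∧
        (∀ a ∈ P, ∀ b : F, b ^ 2 * a ∈ P) ∧ (1 : F) ∈ P ∧
        P ∩ (-P) = {0} ∧ P ∪ (-P) = Set.univ ∨
       (∀ a ∈ -P, ∀ b ∈ -P, a + b ∈ -P) ∧
        (∀ a ∈ -P, ∀ b : F, b ^ 2 * a ∈ -P) ∧ (1 : F) ∈ -P ∧
        (-P) ∩ (-(-P)) = {0} ∧ (-P) ∪ (-(-P)) = Set.univ) := by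
  obtain ⟨le, hrefl, htrans, hantisym, htotal, haddle, hmulle⟩ := hreal
  -- 0 ∈ P₀
  have h0 : (0 : F) ∈ P₀ := by
    have : (0 : F) ∈ P₀ ∩ (-P₀) := by rw [hanti]; rfl
    exact this.1
  -- squares are nonnegative
  have hsqnn : ∀ a : F, le 0 (a * a) := by
    intro a
    rcases htotal 0 a with h | h
    · exact hmulle a a h h
    · have h' : le 0 (-a) := by
        have := haddle a 0 (-a) h
        simpa using this
      have := hmulle (-a) (-a) h' h'
      simpa using this
  -- sums of squares are nonnegative
  have hssnn : ∀ s : F, IsSumSq s → le 0 s := by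
    intro s hs
    induction hs with
    | zero => exact hrefl 0
    | @sq_add a S _ ih =>
      have h1 := haddle 0 S (a * a) ih
      have h2 : le (a * a) (S + a * a) := by simpa using h1
      have h3 := htrans 0 (a * a) (S + a * a) (hsqnn a) h2
      simpa [add_comm] using h3
  -- two sums of squares summing to zero are both zero
  have hsszero : ∀ s t : F, IsSumSq s → IsSumSq t → s + t = 0 → s = 0 ∧ t = 0 := by
    intro s t hs ht hst
    have h1 : le s (s + t) := by
      have := haddle 0 t s (hssnn t ht)
      simpa [add_comm] using this
    rw [hst] at h1
    have hs0 : s = 0 := hantisym s 0 h1 (hssnn s hs)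
    refine ⟨hs0, ?_⟩
    rw [hs0, zero_add] at hst
    exact hst
  -- the family of pre-semicones containing P₀
  set 𝒮 : Set (Set F) := {P | P₀ ⊆ P ∧ (∀ a ∈ P, ∀ b ∈ P, a + b ∈ P) ∧
      (∀ a ∈ P, ∀ b : F, b ^ 2 * a ∈ P) ∧ (∀ x ∈ P, -x ∈ P → x = 0)} with h𝒮
  have hP₀𝒮 : P₀ ∈ 𝒮 := by
    refine ⟨subset_rfl, hadd, hsq, ?_⟩
    intro x hx hx'
    have : x ∈ P₀ ∩ (-P₀) := ⟨hx, by simpa using hx'⟩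
    rw [hanti] at this
    exact this
  obtain ⟨P, hP₀P, hPmax⟩ := zorn_subset_nonempty 𝒮 (by
    intro c hc hchain hne
    refine ⟨⋃₀ c, ⟨?_, ?_, ?_, ?_⟩, fun s hs => Set.subset_sUnion_of_mem hs⟩
    · obtain ⟨Q, hQ⟩ := hne
      exact (hc hQ).1.trans (Set.subset_sUnion_of_mem hQ)
    · rintro a ⟨Qa, hQa, ha⟩ b ⟨Qb, hQb, hb⟩
      rcases hchain.total hQa hQb with h | h
      · exact Set.subset_sUnion_of_mem hQb ((hc hQb).2.1 a (h ha) b hb)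
      · exact Set.subset_sUnion_of_mem hQa ((hc hQa).2.1 a ha b (h hb))
    · rintro a ⟨Qa, hQa, ha⟩ b
      exact Set.subset_sUnion_of_mem hQa ((hc hQa).2.2.1 a ha b)
    · rintro x ⟨Qx, hQx, hx⟩ ⟨Qy, hQy, hy⟩
      rcases hchain.total hQx hQy with h | h
      · exact (hc hQy).2.2.2 x (h hx) hy
      · exact (hc hQx).2.2.2 x hx (h hy)) P₀ hP₀𝒮
  obtain ⟨hPsub, hPadd, hPsq, hPanti⟩ := hPmax.prop
  have h0P : (0 : F) ∈ P := hPsub h0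
  -- sums of squares times elements of P stay in P
  have hssP : ∀ s : F, IsSumSq s → ∀ p ∈ P, s * p ∈ P := by
    intro s hs
    induction hs with
    | zero => intro p hp; simpa using h0P
    | @sq_add a S _ ih =>
      intro p hp
      have h1 : a ^ 2 * p ∈ P := hPsq p hp a
      have h2 : S * p ∈ P := ih p hp
      have := hPadd _ h1 _ h2
      have heq : (a * a + S) * p = a ^ 2 * p + S * p := by ring
      rw [heq]
      exact this
  -- P is total: a ∈ P or -a ∈ P
  have htot : ∀ a : F, a ∈ P ∨ -a ∈ P := by
    intro a
    by_contra hcon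
    push_neg at hcon
    obtain ⟨haP, hnaP⟩ := hcon
    -- extend P by a
    set P' : Set F := {x | ∃ p ∈ P, ∃ s : F, IsSumSq s ∧ x = p + s * a} with hP'
    have hPP' : P ⊆ P' := by
      intro p hp
      exact ⟨p, hp, 0, IsSumSq.zero, by ring⟩
    have h1ss : IsSumSq (1 : F) := by
      have := IsSumSq.sq_add (1 : F) IsSumSq.zero
      rwa [mul_one, add_zero] at this
    have haP' : a ∈ P' := ⟨0, h0P, 1, h1ss, by ring⟩
    have hP'𝒮 : P' ∈ 𝒮 := by
      refine ⟨hP₀P.trans hPP', ?_, ?_, ?_⟩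
      · rintro x ⟨p, hp, s, hs, rfl⟩ y ⟨q, hq, t, ht, rfl⟩
        exact ⟨p + q, hPadd p hp q hq, s + t, hs.add ht, by ring⟩
      · rintro x ⟨p, hp, s, hs, rfl⟩ b
        refine ⟨b ^ 2 * p, hPsq p hp b, b ^ 2 * s, ?_, by ring⟩
        have : (b * b) * s ∈ {z : F | IsSumSq z} := by
          clear hp
          induction hs with
          | zero => simpa using IsSumSq.zero
          | @sq_add c S _ ih =>
            have heq : b * b * (c * c + S) = (b * c) * (b * c) + b * b * S := by ring
            rw [Set.mem_setOf_eq, heq]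
            exact IsSumSq.sq_add _ ih
        simpa [pow_two] using this
      · rintro x ⟨p, hp, s, hs, rfl⟩ ⟨q, hq, t, ht, hx⟩
        have hkey : (p + q) + (s + t) * a = 0 := by
          have : -(p + s * a) = q + t * a := hx
          linear_combination -this
        by_cases hst : s + t = 0
        · obtain ⟨hs0, ht0⟩ := hsszero s t hs ht hst
          rw [hst, zero_mul, add_zero] at hkey
          have hp0 : p = 0 := by
            apply hPanti p hp
            have : -p = q := by linear_combination -hkey
            rw [this]; exact hq
          rw [hp0, hs0] at *
          simp
        · exfalso
          apply hnaP
          have hna : -a = ((s + t)⁻¹) ^ 2 * ((s + t) * (p + q)) := by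
            have hpq : p + q = -((s + t) * a) := by linear_combination hkey
            have hcalc : ((s + t)⁻¹) ^ 2 * ((s + t) * (p + q)) =
                -(((s + t)⁻¹ * (s + t)) ^ 2 * a) := by rw [hpq]; ring
            rw [hcalc, inv_mul_cancel₀ hst]
            simp
          have h1 : (s + t) * p ∈ P := hssP (s + t) (hs.add ht) p hp
          have h2 : (s + t) * q ∈ P := hssP (s + t) (hs.add ht) q hq
          have h3 : (s + t) * (p + q) ∈ P := by
            have := hPadd _ h1 _ h2
            have heq : (s + t) * (p + q) = (s + t) * p + (s + t) * q := by ring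
            rw [heq]; exact this
          rw [hna]
          exact hPsq _ h3 _
    have : P' = P := hPmax.eq_of_superset hP'𝒮 hPP'
    rw [this] at haP'
    exact haP haP'
  -- P ∩ -P = {0}
  have hinter : P ∩ (-P) = {0} := by
    ext x
    constructor
    · rintro ⟨hx1, hx2⟩
      exact hPanti x hx1 (by simpa using hx2)
    · rintro rfl
      exact ⟨h0P, by simpa using h0P⟩
  have hunion : P ∪ (-P) = Set.univ := by
    ext x
    simp only [Set.mem_union, Set.mem_neg, Set.mem_univ, iff_true]
    exact htot x
  refine ⟨P, hP₀P, ?_⟩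
  rcases htot 1 with h1 | h1
  · exact Or.inl ⟨hPadd, hPsq, h1, hinter, hunion⟩
  · refine Or.inr ⟨?_, ?_, by simpa using h1, ?_, ?_⟩
    · intro a ha b hb
      simp only [Set.mem_neg] at *
      have := hPadd _ ha _ hb
      simpa [neg_add, add_comm] using this
    · intro a ha b
      simp only [Set.mem_neg] at *
      have := hPsq _ ha b
      simpa [mul_neg] using this
    · rw [neg_neg, Set.inter_comm]; exact hinter
    · rw [neg_neg, Set.union_comm]; exact hunion
end

section
/- Let P be a semicone (positive cone of a semiordering) of a field F and F₀ a subfield. Then the set A = {a ∈ F : ∃ b ∈ F₀, a ≤ b and -a ≤ b} is a valuation ring of F (i.e., a subring such that for every nonzero x ∈ F, x ∈ A or x⁻¹ ∈ A). -/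
/-- For a semicone `P` of a field `F` (positive cone of a semiordering, with
`a ≤ b ↔ b - a ∈ P`) and a subfield `F₀`, the set
`A = {a : ∃ b ∈ F₀, a ≤ b ∧ -a ≤ b}` is a valuation ring of `F`. -/
theorem stmt13 (F : Type*) [Field F] (P : Set F)
    (hadd : ∀ a ∈ P, ∀ b ∈ P, a + b ∈ P)
    (hsq : ∀ a ∈ P, ∀ b : F, b ^ 2 * a ∈ P)
    (hone : (1 : F) ∈ P)
    (hanti : P ∩ (-P) = {0})
    (htotal : P ∪ (-P) = Set.univ)
    (F₀ : Subfield F) :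
    let A : Set F := {a : F | ∃ b ∈ F₀, b - a ∈ P ∧ b + a ∈ P}
    (0 : F) ∈ A ∧ (1 : F) ∈ A ∧
    (∀ a ∈ A, ∀ b ∈ A, a + b ∈ A) ∧
    (∀ a ∈ A, ∀ b ∈ A, a * b ∈ A) ∧
    (∀ a ∈ A, -a ∈ A) ∧
    (∀ x : F, x ≠ 0 → x ∈ A ∨ x⁻¹ ∈ A) := by
  intro A
  -- basic facts
  have h0P : (0 : F) ∈ P := by
    have : (0 : F) ∈ P ∩ (-P) := by rw [hanti]; rfl
    exact this.1
  have h2ne : (2 : F) ≠ 0 := by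
    intro h
    have hm : (-1 : F) = 1 := by linear_combination -h
    have h1 : (1 : F) ∈ P ∩ (-P) := ⟨hone, by simp only [Set.mem_neg, hm]; exact hone⟩
    rw [hanti] at h1
    exact one_ne_zero h1
  have hhalf : ∀ x : F, x + x ∈ P → x ∈ P := by
    intro x hx
    have h4 := hadd _ hx _ hx
    have h := hsq _ h4 (2⁻¹ : F)
    have e : (2⁻¹ : F) ^ 2 * (x + x + (x + x)) = x := by
      field_simp
      ring
    rwa [e] at h
  have hsqmem : ∀ c : F, c ^ 2 ∈ P := by
    intro c
    have := hsq _ hone c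
    simpa using this
  have hneg : ∀ y : F, y ∈ P ∨ -y ∈ P := by
    intro y
    have : y ∈ P ∪ (-P) := by rw [htotal]; trivial
    rcases this with h | h
    · exact Or.inl h
    · exact Or.inr (Set.mem_neg.mp h)
  -- membership in A
  have hmemA : ∀ a : F, a ∈ A ↔ ∃ b ∈ F₀, b - a ∈ P ∧ b + a ∈ P := by
    intro a; rfl
  -- negation closure
  have hnegA : ∀ a ∈ A, -a ∈ A := by
    rintro a ⟨b, hbF, h1, h2⟩
    exact ⟨b, hbF, by rw [sub_neg_eq_add]; exact h2, by rw [← sub_eq_add_neg]; exact h1⟩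
  -- addition closure
  have haddA : ∀ a ∈ A, ∀ b ∈ A, a + b ∈ A := by
    rintro a ⟨b, hbF, h1, h2⟩ a' ⟨b', hbF', h1', h2'⟩
    refine ⟨b + b', F₀.add_mem hbF hbF', ?_, ?_⟩
    · have := hadd _ h1 _ h1'
      have e : b + b' - (a + a') = b - a + (b' - a') := by ring
      rwa [e]
    · have := hadd _ h2 _ h2'
      have e : b + b' + (a + a') = b + a + (b' + a') := by ring
      rwa [e]
  -- squares are in A
  have hsqA : ∀ a ∈ A, a ^ 2 ∈ A := by
    rintro a ⟨b₀, hb₀F, h1, h2⟩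
    have hb0P : b₀ ∈ P := by
      apply hhalf
      have := hadd _ h1 _ h2
      have e : b₀ + b₀ = b₀ - a + (b₀ + a) := by ring
      rwa [e]
    have hp : b₀ + 1 - a ∈ P := by
      have := hadd _ h1 _ hone
      have e : b₀ + 1 - a = b₀ - a + 1 := by ring
      rwa [e]
    have hs : b₀ + 1 + a ∈ P := by
      have := hadd _ h2 _ hone
      have e : b₀ + 1 + a = b₀ + a + 1 := by ring
      rwa [e]
    have hbP : b₀ + 1 ∈ P := hadd _ hb0P _ hone
    have key : (b₀ + 1) ^ 3 - a ^ 2 * (b₀ + 1) ∈ P := by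
      apply hhalf
      have t1 : (b₀ + 1 - a) ^ 2 * (b₀ + 1 + a) ∈ P := hsq _ hs _
      have t2 : (b₀ + 1 + a) ^ 2 * (b₀ + 1 - a) ∈ P := hsq _ hp _
      have t3 := hadd _ t1 _ t2
      have e : (b₀ + 1) ^ 3 - a ^ 2 * (b₀ + 1) + ((b₀ + 1) ^ 3 - a ^ 2 * (b₀ + 1))
          = (b₀ + 1 - a) ^ 2 * (b₀ + 1 + a) + (b₀ + 1 + a) ^ 2 * (b₀ + 1 - a) := by
        ring
      rwa [e]
    refine ⟨(b₀ + 1) ^ 3, F₀.pow_mem (F₀.add_mem hb₀F F₀.one_mem) 3, ?_, ?_⟩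
    · have t4 : a ^ 2 * b₀ ∈ P := hsq _ hb0P a
      have := hadd _ key _ t4
      have e : (b₀ + 1) ^ 3 - a ^ 2 = (b₀ + 1) ^ 3 - a ^ 2 * (b₀ + 1) + a ^ 2 * b₀ := by ring
      rwa [e]
    · have hb3 : (b₀ + 1) ^ 3 ∈ P := by
        have := hsq _ hbP (b₀ + 1)
        have e : (b₀ + 1) ^ 3 = (b₀ + 1) ^ 2 * (b₀ + 1) := by ring
        rwa [e]
      exact hadd _ hb3 _ (hsqmem a)
  -- division by 4
  have h2F : (2 : F) ∈ F₀ := by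
    have := F₀.add_mem F₀.one_mem F₀.one_mem
    norm_num at this
    rw [← one_add_one_eq_two]; exact F₀.add_mem F₀.one_mem F₀.one_mem
  have h4ne : (4 : F) ≠ 0 := by
    rw [show (4 : F) = 2 * 2 by norm_num]
    exact mul_ne_zero h2ne h2ne
  have hquarter : ∀ z : F, 4 * z ∈ A → z ∈ A := by
    rintro z ⟨b, hbF, h1, h2⟩
    have h4F : (4 : F) ∈ F₀ := by
      have := F₀.mul_mem h2F h2F
      norm_num at this
      rw [show (4 : F) = 2 * 2 by norm_num]; exact F₀.mul_mem h2F h2F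
    refine ⟨b / 4, F₀.div_mem hbF h4F, ?_, ?_⟩
    · have := hsq _ h1 (2⁻¹ : F)
      have e : (2⁻¹ : F) ^ 2 * (b - 4 * z) = b / 4 - z := by
        field_simp [h2ne, h4ne]
        try ring
        try exact Or.inl trivial
      rwa [e] at this
    · have := hsq _ h2 (2⁻¹ : F)
      have e : (2⁻¹ : F) ^ 2 * (b + 4 * z) = b / 4 + z := by
        field_simp [h2ne, h4ne]
        try ring
        try exact Or.inl trivial
      rwa [e] at this
  -- multiplication closure
  have hmulA : ∀ a ∈ A, ∀ b ∈ A, a * b ∈ A := by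
    intro a ha b hb
    apply hquarter
    have hX : (a + b) ^ 2 ∈ A := hsqA _ (haddA _ ha _ hb)
    have hY : (a - b) ^ 2 ∈ A := by
      have : a - b ∈ A := by
        have := haddA _ ha _ (hnegA _ hb)
        simpa [sub_eq_add_neg] using this
      exact hsqA _ this
    have := haddA _ hX _ (hnegA _ hY)
    have e : 4 * (a * b) = (a + b) ^ 2 + -(a - b) ^ 2 := by ring
    rwa [e]
  -- valuation: positive case
  have hval : ∀ x : F, x ≠ 0 → x ∈ P → (x ∈ A ∨ x⁻¹ ∈ A) := by
    intro x hx hxP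
    have hxiP : x⁻¹ ∈ P := by
      have := hsq _ hxP x⁻¹
      have e : (x⁻¹ : F) ^ 2 * x = x⁻¹ := by
        field_simp
      rwa [e] at this
    rcases hneg (1 - x) with h | h
    · exact Or.inl ⟨1, F₀.one_mem, h, hadd _ hone _ hxP⟩
    · right
      have hx1 : x - 1 ∈ P := by
        have e : x - 1 = -(1 - x) := by ring
        rwa [e]
      refine ⟨1, F₀.one_mem, ?_, hadd _ hone _ hxiP⟩
      have t : (x - 1) ^ 2 * 1 + 1 ^ 2 * (x - 1) ∈ P :=
        hadd _ (hsq _ hone _) _ (hsq _ hx1 _)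
      have t2 : x ^ 2 - x ∈ P := by
        have e : x ^ 2 - x = (x - 1) ^ 2 * 1 + 1 ^ 2 * (x - 1) := by ring
        rwa [e]
      have := hsq _ t2 x⁻¹
      have e2 : (x⁻¹ : F) ^ 2 * (x ^ 2 - x) = 1 - x⁻¹ := by
        field_simp
      rwa [e2] at this
  refine ⟨⟨1, F₀.one_mem, by simpa using hone, by simpa using hone⟩,
    ⟨1, F₀.one_mem, by simpa using h0P, hadd _ hone _ hone⟩,
    haddA, hmulA, hnegA, ?_⟩
  intro x hx
  rcases hneg x with hxP | hxN
  · exact hval x hx hxP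
  · rcases hval (-x) (neg_ne_zero.mpr hx) hxN with h | h
    · left
      have := hnegA _ h
      simpa using this
    · right
      have := hnegA _ h
      simpa [inv_neg] using this
end

section
/- Let v be a non-trivial valuation of ℝ(X) with formally real residue field whose valuation ring contains ℝ. Then either (a) v is equivalent to the valuation v_t for some t ∈ ℝ, where v_t measures the order of vanishing at t, with residue field isomorphic to ℝ via y ↦ y(t); or (b) v is equivalent to the degree valuation v_∞ defined by v_∞(f/g) = deg g - deg f, with residue field isomorphic to ℝ via y ↦ lim_{t→∞} y(t). -/
open Polynomial Filter

section Aux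
variable {Γ₀ : Type*} [LinearOrderedCommGroupWithZero Γ₀]

private lemma aux_lt_one {a b g : Γ₀} (h : a * g = b) (hlt : b < g) : a < 1 := by
  by_contra hc
  push_neg at hc
  have : g ≤ b := by calc g = 1 * g := (one_mul g).symm
                        _ ≤ a * g := mul_le_mul_left hc g
                        _ = b := h
  exact absurd hlt (not_lt.2 this)

private lemma aux_le_one' {a b g : Γ₀} (h : a * g = b) (hle : b ≤ g) (hg : g ≠ 0) : a ≤ 1 := by
  have : a = b * g⁻¹ := by rw [← h, mul_inv_cancel_right₀ hg]
  rw [this, ← mul_inv_cancel₀ hg]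
  exact mul_le_mul_left hle g⁻¹

variable (v : Valuation (RatFunc ℝ) Γ₀)

private lemma aux_vC (hR : ∀ r : ℝ, v (RatFunc.C r) ≤ 1) {c : ℝ} (hc : c ≠ 0) :
    v (RatFunc.C c) = 1 := by
  have h1 : v (RatFunc.C c) * v (RatFunc.C c⁻¹) = 1 := by
    rw [← v.map_mul, ← map_mul, mul_inv_cancel₀ hc, map_one, v.map_one]
  refine le_antisymm (hR c) ?_
  calc (1:Γ₀) = v (RatFunc.C c) * v (RatFunc.C c⁻¹) := h1.symm
    _ ≤ v (RatFunc.C c) * 1 := mul_le_mul_right (hR c⁻¹) _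
    _ = v (RatFunc.C c) := mul_one _

private lemma aux_key (f : RatFunc ℝ) :
    v f * v (algebraMap ℝ[X] (RatFunc ℝ) f.denom) = v (algebraMap ℝ[X] (RatFunc ℝ) f.num) := by
  rw [← v.map_mul]
  congr 1
  nth_rewrite 1 [← RatFunc.num_div_denom f]
  rw [div_mul_cancel₀ _ (RatFunc.algebraMap_ne_zero (RatFunc.denom_ne_zero f))]

private lemma aux_pow (hC : ∀ c : ℝ, c ≠ 0 → v (algebraMap ℝ[X] (RatFunc ℝ) (C c)) = 1)
    (hX : 1 < v (algebraMap ℝ[X] (RatFunc ℝ) X)) :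
    ∀ p : ℝ[X], p ≠ 0 → v (algebraMap ℝ[X] (RatFunc ℝ) p)
      = (v (algebraMap ℝ[X] (RatFunc ℝ) X)) ^ p.natDegree := by
  suffices H : ∀ (n : ℕ) (p : ℝ[X]), p ≠ 0 → p.natDegree = n →
      v (algebraMap ℝ[X] (RatFunc ℝ) p)
        = (v (algebraMap ℝ[X] (RatFunc ℝ) X)) ^ p.natDegree by
    exact fun p hp => H p.natDegree p hp rfl
  intro n
  induction n using Nat.strong_induction_on with
  | _ n ih =>
    intro p hp hn
    subst hn
    have hmon : v (algebraMap ℝ[X] (RatFunc ℝ) (C p.leadingCoeff * X ^ p.natDegree))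
        = (v (algebraMap ℝ[X] (RatFunc ℝ) X)) ^ p.natDegree := by
      rw [map_mul, map_pow, v.map_mul, v.map_pow, hC _ (leadingCoeff_ne_zero.2 hp), one_mul]
    by_cases he : p.eraseLead = 0
    · have hrep : p = C p.leadingCoeff * X ^ p.natDegree := by
        conv_lhs => rw [← p.eraseLead_add_C_mul_X_pow]
        rw [he, zero_add]
      rw [show v (algebraMap ℝ[X] (RatFunc ℝ) p)
          = v (algebraMap ℝ[X] (RatFunc ℝ) (C p.leadingCoeff * X ^ p.natDegree)) from by
          conv_lhs => rw [hrep]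
        , hmon]
    · have hlt : p.eraseLead.natDegree < p.natDegree :=
        p.eraseLead_natDegree_lt_or_eraseLead_eq_zero.resolve_right he
      have hev : v (algebraMap ℝ[X] (RatFunc ℝ) p.eraseLead)
          = (v (algebraMap ℝ[X] (RatFunc ℝ) X)) ^ p.eraseLead.natDegree :=
        ih _ hlt _ he rfl
      have hne : v (algebraMap ℝ[X] (RatFunc ℝ) p.eraseLead)
          ≠ v (algebraMap ℝ[X] (RatFunc ℝ) (C p.leadingCoeff * X ^ p.natDegree)) := by
        rw [hev, hmon]; exact (pow_lt_pow_right₀ hX hlt).ne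
      calc v (algebraMap ℝ[X] (RatFunc ℝ) p)
          = v (algebraMap ℝ[X] (RatFunc ℝ) p.eraseLead
              + algebraMap ℝ[X] (RatFunc ℝ) (C p.leadingCoeff * X ^ p.natDegree)) := by
            rw [← map_add, p.eraseLead_add_C_mul_X_pow]
        _ = max (v (algebraMap ℝ[X] (RatFunc ℝ) p.eraseLead))
              (v (algebraMap ℝ[X] (RatFunc ℝ) (C p.leadingCoeff * X ^ p.natDegree))) :=
            v.map_add_of_distinct_val hne
        _ = (v (algebraMap ℝ[X] (RatFunc ℝ) X)) ^ p.natDegree := by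
            rw [hev, hmon]
            exact max_eq_right (pow_le_pow_right₀ hX.le hlt.le)

private lemma aux_le (hR : ∀ r : ℝ, v (RatFunc.C r) ≤ 1)
    (hX : v (algebraMap ℝ[X] (RatFunc ℝ) X) ≤ 1) (p : ℝ[X]) :
    v (algebraMap ℝ[X] (RatFunc ℝ) p) ≤ 1 := by
  induction p using Polynomial.induction_on with
  | C a => rw [RatFunc.algebraMap_C]; exact hR a
  | add p q hp hq => rw [map_add]; exact v.map_add_le hp hq
  | monomial n a h =>
      have hrep : Polynomial.C a * X ^ (n+1) = Polynomial.C a * X ^ n * X := by ring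
      rw [hrep, map_mul, v.map_mul]
      exact mul_le_one' h hX

private lemma aux_irred
    (hCrat : ∀ c : ℝ, c ≠ 0 → v (RatFunc.C c) = 1)
    (hall : ∀ p : ℝ[X], v (algebraMap ℝ[X] (RatFunc ℝ) p) ≤ 1)
    (htall : ∀ t : ℝ, v (algebraMap ℝ[X] (RatFunc ℝ) (X - C t)) = 1)
    (hreal1 : ∀ a : RatFunc ℝ, v a ≤ 1 → ¬ v (1 + a ^ 2) < 1)
    {q : ℝ[X]} (hq : Irreducible q) : v (algebraMap ℝ[X] (RatFunc ℝ) q) = 1 := by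
  have h1 : 0 < q.natDegree := hq.natDegree_pos
  have h2 : q.natDegree ≤ 2 := hq.natDegree_le_two
  interval_cases hdeg : q.natDegree
  · -- degree 1
    obtain ⟨α, hα, β, hrep⟩ := natDegree_eq_one.mp hdeg
    set t : ℝ := -(β / α) with ht
    have hfac : q = C α * (X - C t) := by
      rw [← hrep, mul_sub, ← C_mul]
      have : α * t = -β := by rw [ht]; field_simp
      rw [this, C_neg, sub_neg_eq_add]
    rw [hfac, map_mul, v.map_mul, RatFunc.algebraMap_C, hCrat α hα, one_mul, htall t]
  · -- degree 2
    set a : ℝ := q.coeff 2 with ha'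
    set b : ℝ := q.coeff 1 with hb'
    set c : ℝ := q.coeff 0 with hc'
    have ha : a ≠ 0 := by
      have := leadingCoeff_ne_zero.2 hq.ne_zero
      rwa [leadingCoeff, hdeg] at this
    have hrep : q = C c + C b * X + C a * X ^ 2 := by
      conv_lhs => rw [q.as_sum_range' 3 (by omega)]
      simp [Finset.sum_range_succ, ← C_mul_X_pow_eq_monomial]
      rfl
    have hroot : ∀ x : ℝ, ¬ q.IsRoot x := by
      intro x hx
      obtain ⟨u, hu⟩ := dvd_iff_isRoot.2 hx
      have hu0 : u ≠ 0 := by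
        intro h; exact hq.ne_zero (by rw [hu, h, mul_zero])
      rcases hq.isUnit_or_isUnit hu with h | h
      · exact not_isUnit_X_sub_C x h
      · have := natDegree_eq_zero_of_isUnit h
        have h2 := natDegree_mul (X_sub_C_ne_zero x) hu0
        rw [← hu, hdeg, natDegree_X_sub_C, this] at h2
        omega
    have hdisc : discrim a b c < 0 := by
      by_contra hge
      push_neg at hge
      obtain ⟨x, hx⟩ := exists_quadratic_eq_zero ha
        ⟨Real.sqrt (discrim a b c), (Real.mul_self_sqrt hge).symm⟩
      exact hroot x (by rw [IsRoot, hrep]; simp; nlinarith [hx])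
    set s : ℝ := -(b / (2 * a)) with hs
    set d : ℝ := c / a - s ^ 2 with hd'
    have hd : 0 < d := by
      have hdd : d = (4 * a * c - b ^ 2) / (4 * a ^ 2) := by
        rw [hd', hs]; field_simp; ring
      rw [hdd]
      apply div_pos
      · rw [discrim] at hdisc; nlinarith
      · positivity
    have hfac : q = C a * ((X - C s) ^ 2 + C d) := by
      have e1 : b = -(a * (2 * s)) := by rw [hs]; field_simp
      have e2 : c = a * (s ^ 2 + d) := by rw [hd']; field_simp; ring
      rw [hrep]
      nth_rewrite 1 [e1, e2]
      simp only [C_neg, C_mul, C_add, C_pow, map_ofNat]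
      ring
    set r : ℝ := Real.sqrt d with hr
    have hr0 : r ≠ 0 := by positivity
    have hr2 : r ^ 2 = d := Real.sq_sqrt hd.le
    set y := algebraMap ℝ[X] (RatFunc ℝ) (X - C s) with hy
    set a0 : RatFunc ℝ := RatFunc.C r⁻¹ * y with ha0
    have hva0 : v a0 = 1 := by
      rw [ha0, v.map_mul, hCrat _ (inv_ne_zero hr0), one_mul, hy, htall s]
    have hsum : 1 + a0 ^ 2 = RatFunc.C d⁻¹ * algebraMap ℝ[X] (RatFunc ℝ) ((X - C s) ^ 2 + C d) := by
      rw [map_add, map_pow, RatFunc.algebraMap_C, ← hy]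
      have hC2 : (RatFunc.C r⁻¹) ^ 2 = RatFunc.C d⁻¹ := by
        rw [← map_pow, inv_pow, hr2]
      have hCd : RatFunc.C d⁻¹ * RatFunc.C d = 1 := by
        rw [← map_mul, inv_mul_cancel₀ hd.ne', map_one]
      calc 1 + a0 ^ 2 = RatFunc.C d⁻¹ * y ^ 2 + 1 := by
            rw [ha0, mul_pow, hC2]; ring
        _ = RatFunc.C d⁻¹ * (y ^ 2 + RatFunc.C d) := by rw [mul_add, hCd]
    have hv1 : v (1 + a0 ^ 2) = 1 := by
      refine le_antisymm (v.map_add_le v.map_one.le ?_) ?_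
      · rw [v.map_pow, hva0, one_pow]
      · exact not_lt.1 (hreal1 a0 hva0.le)
    have hmid : v (algebraMap ℝ[X] (RatFunc ℝ) ((X - C s) ^ 2 + C d)) = 1 := by
      have := hv1
      rw [hsum, v.map_mul, hCrat _ (inv_ne_zero hd.ne'), one_mul] at this
      exact this
    rw [hfac, map_mul, v.map_mul, RatFunc.algebraMap_C, hCrat a ha, one_mul, hmid]

private lemma aux_all_one
    (hCrat : ∀ c : ℝ, c ≠ 0 → v (RatFunc.C c) = 1)
    (hall : ∀ p : ℝ[X], v (algebraMap ℝ[X] (RatFunc ℝ) p) ≤ 1)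
    (htall : ∀ t : ℝ, v (algebraMap ℝ[X] (RatFunc ℝ) (X - C t)) = 1)
    (hreal1 : ∀ a : RatFunc ℝ, v a ≤ 1 → ¬ v (1 + a ^ 2) < 1) :
    ∀ p : ℝ[X], p ≠ 0 → v (algebraMap ℝ[X] (RatFunc ℝ) p) = 1 := by
  suffices H : ∀ (n : ℕ) (p : ℝ[X]), p ≠ 0 → p.natDegree = n →
      v (algebraMap ℝ[X] (RatFunc ℝ) p) = 1 by
    exact fun p hp => H p.natDegree p hp rfl
  intro n
  induction n using Nat.strong_induction_on with
  | _ n ih =>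
    intro p hp hn
    subst hn
    by_cases hu : IsUnit p
    · obtain ⟨rr, hrr, rfl⟩ := Polynomial.isUnit_iff.mp hu
      rw [RatFunc.algebraMap_C]
      exact hCrat rr hrr.ne_zero
    · obtain ⟨i, hi, r, rfl⟩ := WfDvdMonoid.exists_irreducible_factor hu hp
      have hr0 : r ≠ 0 := fun h => hp (by rw [h, mul_zero])
      have hlt : r.natDegree < (i * r).natDegree := by
        rw [natDegree_mul hi.ne_zero hr0]
        have := hi.natDegree_pos
        omega
      rw [map_mul, v.map_mul, aux_irred v hCrat hall htall hreal1 hi, one_mul]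
      exact ih _ hlt r hr0 rfl

private lemma aux_eval_ne
    (hCrat : ∀ c : ℝ, c ≠ 0 → v (RatFunc.C c) = 1)
    (hall : ∀ p : ℝ[X], v (algebraMap ℝ[X] (RatFunc ℝ) p) ≤ 1) {t : ℝ}
    (ht : v (algebraMap ℝ[X] (RatFunc ℝ) (X - C t)) < 1) {p : ℝ[X]} (hp : p.eval t ≠ 0) :
    v (algebraMap ℝ[X] (RatFunc ℝ) p) = 1 := by
  obtain ⟨h, hh⟩ := X_sub_C_dvd_sub_C_eval (a := t) (p := p)
  have h1 : v (algebraMap ℝ[X] (RatFunc ℝ) (p - C (p.eval t))) < 1 := by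
    rw [hh, map_mul, v.map_mul]
    exact lt_of_le_of_lt (mul_le_of_le_one_right' (hall h)) ht
  have h2 : v (RatFunc.C (p.eval t)) = 1 := hCrat _ hp
  have hrep : algebraMap ℝ[X] (RatFunc ℝ) p
      = RatFunc.C (p.eval t) + algebraMap ℝ[X] (RatFunc ℝ) (p - C (p.eval t)) := by
    rw [← RatFunc.algebraMap_C, ← map_add]
    congr 1
    ring
  rw [hrep, v.map_add_of_distinct_val (by rw [h2]; exact (ne_of_lt h1).symm), h2]
  exact max_eq_left h1.le

private lemma aux_eval_zero
    (hall : ∀ p : ℝ[X], v (algebraMap ℝ[X] (RatFunc ℝ) p) ≤ 1) {t : ℝ}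
    (ht : v (algebraMap ℝ[X] (RatFunc ℝ) (X - C t)) < 1) {p : ℝ[X]} (hp : p.eval t = 0) :
    v (algebraMap ℝ[X] (RatFunc ℝ) p) < 1 := by
  obtain ⟨h, hh⟩ := dvd_iff_isRoot.2 hp
  rw [hh, map_mul, v.map_mul]
  exact lt_of_le_of_lt (mul_le_of_le_one_right' (hall h)) ht

private lemma aux_sub_C (f : RatFunc ℝ) (e : ℝ) :
    (f - RatFunc.C e) * algebraMap ℝ[X] (RatFunc ℝ) f.denom
      = algebraMap ℝ[X] (RatFunc ℝ) (f.num - C e * f.denom) := by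
  rw [sub_mul, map_sub, map_mul, RatFunc.algebraMap_C]
  congr 1
  nth_rewrite 1 [← RatFunc.num_div_denom f]
  rw [div_mul_cancel₀ _ (RatFunc.algebraMap_ne_zero (RatFunc.denom_ne_zero f))]

end Aux

/-- Classification of non-trivial real places of ℝ(X) whose valuation ring contains ℝ:
either the valuation ring is that of the order-of-vanishing valuation `v_t` at some
`t : ℝ` (with residue map given by evaluation at `t`), or it is that of the degree
valuation `v_∞` (with residue map given by the limit at infinity).
Equivalence of valuations is expressed via equality of valuation rings, the
residue-field isomorphism with ℝ via the stated map, and formal reality of the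
residue field via sums of squares of integral elements. -/
theorem stmt14 {Γ₀ : Type*} [LinearOrderedCommGroupWithZero Γ₀]
    (v : Valuation (RatFunc ℝ) Γ₀)
    (hsurj : Function.Surjective v)
    (hnontriv : ∃ x : RatFunc ℝ, x ≠ 0 ∧ v x ≠ 1)
    (hR : ∀ r : ℝ, v (RatFunc.C r) ≤ 1)
    (hreal : ¬ ∃ (m : ℕ) (a : Fin m → RatFunc ℝ),
      (∀ i, v (a i) ≤ 1) ∧ v (1 + ∑ i, (a i) ^ 2) < 1) :
    (∃ t : ℝ,
      (∀ f : RatFunc ℝ, v f ≤ 1 ↔ f.denom.eval t ≠ 0) ∧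
      (∀ f : RatFunc ℝ, v f ≤ 1 →
        v (f - RatFunc.C ((f.num.eval t) / (f.denom.eval t))) < 1)) ∨
    ((∀ f : RatFunc ℝ, v f ≤ 1 ↔ f.num.degree ≤ f.denom.degree) ∧
      (∀ f : RatFunc ℝ, v f ≤ 1 → ∃ L : ℝ,
        Tendsto (fun x : ℝ => (f.num.eval x) / (f.denom.eval x)) atTop (nhds L) ∧
        v (f - RatFunc.C L) < 1)) := by
  classical
  have hCrat : ∀ c : ℝ, c ≠ 0 → v (RatFunc.C c) = 1 := fun c hc => aux_vC v hR hc
  have hreal1 : ∀ a : RatFunc ℝ, v a ≤ 1 → ¬ v (1 + a ^ 2) < 1 := by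
    intro a hva hlt
    exact hreal ⟨1, fun _ => a, fun _ => hva, by simpa using hlt⟩
  by_cases hX : v (algebraMap ℝ[X] (RatFunc ℝ) X) ≤ 1
  · -- case v_t
    left
    have hall : ∀ p : ℝ[X], v (algebraMap ℝ[X] (RatFunc ℝ) p) ≤ 1 := aux_le v hR hX
    have hex : ∃ t : ℝ, v (algebraMap ℝ[X] (RatFunc ℝ) (X - C t)) < 1 := by
      by_contra hno
      push_neg at hno
      have htall : ∀ t : ℝ, v (algebraMap ℝ[X] (RatFunc ℝ) (X - C t)) = 1 :=
        fun t => le_antisymm (hall _) (hno t)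
      obtain ⟨x, hx0, hx1⟩ := hnontriv
      have hk := aux_key v x
      rw [aux_all_one v hCrat hall htall hreal1 _ (RatFunc.denom_ne_zero x), mul_one,
          aux_all_one v hCrat hall htall hreal1 _ (RatFunc.num_ne_zero hx0)] at hk
      exact hx1 hk
    obtain ⟨t, ht⟩ := hex
    have hiff : ∀ f : RatFunc ℝ, v f ≤ 1 ↔ f.denom.eval t ≠ 0 := by
      intro f
      constructor
      · intro hvf hd0
        have hnum0 : f.num.eval t ≠ 0 := by
          intro hn
          obtain ⟨a, b, hab⟩ := RatFunc.isCoprime_num_denom f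
          have h3 := congrArg (Polynomial.eval t) hab
          simp [hn, hd0] at h3
        have h1 : v (algebraMap ℝ[X] (RatFunc ℝ) f.num) = 1 :=
          aux_eval_ne v hCrat hall ht hnum0
        have h2 : v (algebraMap ℝ[X] (RatFunc ℝ) f.denom) < 1 :=
          aux_eval_zero v hall ht hd0
        have hk := aux_key v f
        rw [h1] at hk
        have hle : v f * v (algebraMap ℝ[X] (RatFunc ℝ) f.denom)
            ≤ v (algebraMap ℝ[X] (RatFunc ℝ) f.denom) := mul_le_of_le_one_left' hvf
        rw [hk] at hle
        exact absurd (lt_of_le_of_lt hle h2) (lt_irrefl _)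
      · intro hd0
        have h2 : v (algebraMap ℝ[X] (RatFunc ℝ) f.denom) = 1 :=
          aux_eval_ne v hCrat hall ht hd0
        have hk := aux_key v f
        rw [h2, mul_one] at hk
        rw [hk]
        exact hall _
    refine ⟨t, hiff, ?_⟩
    intro f hvf
    have hd0 : f.denom.eval t ≠ 0 := (hiff f).1 hvf
    set e : ℝ := f.num.eval t / f.denom.eval t with he
    have hd2 : v (algebraMap ℝ[X] (RatFunc ℝ) f.denom) = 1 :=
      aux_eval_ne v hCrat hall ht hd0
    have hg : (f.num - C e * f.denom).eval t = 0 := by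
      simp only [eval_sub, eval_mul, eval_C, he]
      field_simp
      ring
    have hvg : v (algebraMap ℝ[X] (RatFunc ℝ) (f.num - C e * f.denom)) < 1 :=
      aux_eval_zero v hall ht hg
    have hkey := congrArg v (aux_sub_C f e)
    rw [v.map_mul, hd2, mul_one] at hkey
    rw [hkey]
    exact hvg
  · -- case v_∞
    right
    push_neg at hX
    have hCp : ∀ c : ℝ, c ≠ 0 → v (algebraMap ℝ[X] (RatFunc ℝ) (C c)) = 1 := by
      intro c hc; rw [RatFunc.algebraMap_C]; exact hCrat c hc
    have hpow := aux_pow v hCp hX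
    have hξ0 : v (algebraMap ℝ[X] (RatFunc ℝ) X) ≠ 0 := by
      rw [v.ne_zero_iff]
      exact RatFunc.algebraMap_ne_zero X_ne_zero
    have hiff : ∀ f : RatFunc ℝ, v f ≤ 1 ↔ f.num.degree ≤ f.denom.degree := by
      intro f
      by_cases hf0 : f = 0
      · subst hf0
        simp [RatFunc.num_zero]
      · have hnum : f.num ≠ 0 := RatFunc.num_ne_zero hf0
        have hden : f.denom ≠ 0 := RatFunc.denom_ne_zero f
        have hk := aux_key v f
        rw [hpow _ hnum, hpow _ hden] at hk
        constructor
        · intro h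
          have hle : v (algebraMap ℝ[X] (RatFunc ℝ) X) ^ f.num.natDegree
              ≤ v (algebraMap ℝ[X] (RatFunc ℝ) X) ^ f.denom.natDegree := by
            rw [← hk]
            calc v f * v (algebraMap ℝ[X] (RatFunc ℝ) X) ^ f.denom.natDegree
                ≤ 1 * v (algebraMap ℝ[X] (RatFunc ℝ) X) ^ f.denom.natDegree :=
                  mul_le_mul_left h _
              _ = v (algebraMap ℝ[X] (RatFunc ℝ) X) ^ f.denom.natDegree := one_mul _
          have hnd : f.num.natDegree ≤ f.denom.natDegree := by
            by_contra hlt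
            push_neg at hlt
            exact absurd hle (not_le.2 (pow_lt_pow_right₀ hX hlt))
          rw [degree_eq_natDegree hnum, degree_eq_natDegree hden]
          exact_mod_cast hnd
        · intro h
          have hnd : f.num.natDegree ≤ f.denom.natDegree := by
            rw [degree_eq_natDegree hnum, degree_eq_natDegree hden] at h
            exact_mod_cast h
          exact aux_le_one' hk (pow_le_pow_right₀ hX.le hnd) (pow_ne_zero _ hξ0)
    refine ⟨hiff, ?_⟩
    intro f hvf
    by_cases hf0 : f = 0
    · subst hf0
      refine ⟨0, ?_, ?_⟩
      · simp only [RatFunc.num_zero, RatFunc.denom_zero, eval_zero, eval_one, zero_div]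
        exact tendsto_const_nhds
      · rw [map_zero, sub_zero, v.map_zero]
        exact zero_lt_one
    · have hnum : f.num ≠ 0 := RatFunc.num_ne_zero hf0
      have hden : f.denom ≠ 0 := RatFunc.denom_ne_zero f
      have hdeg : f.num.degree ≤ f.denom.degree := (hiff f).1 hvf
      rcases hdeg.lt_or_eq with hlt | heq
      · refine ⟨0, Polynomial.div_tendsto_zero_of_degree_lt _ _ hlt, ?_⟩
        rw [map_zero, sub_zero]
        have hk := aux_key v f
        rw [hpow _ hnum, hpow _ hden] at hk
        exact aux_lt_one hk (pow_lt_pow_right₀ hX ((natDegree_lt_natDegree_iff hnum).2 hlt))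
      · set L : ℝ := f.num.leadingCoeff / f.denom.leadingCoeff with hL
        refine ⟨L, Polynomial.div_tendsto_leadingCoeff_div_of_degree_eq _ _ heq, ?_⟩
        have hL0 : L ≠ 0 :=
          div_ne_zero (leadingCoeff_ne_zero.2 hnum) (leadingCoeff_ne_zero.2 hden)
        set g : ℝ[X] := f.num - C L * f.denom with hgdef
        have hkey := congrArg v (aux_sub_C f L)
        rw [v.map_mul, hpow _ hden] at hkey
        by_cases hgz : g = 0
        · rw [← hgdef, hgz, map_zero, v.map_zero, mul_eq_zero] at hkey
          rcases hkey with h | h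
          · rw [h]; exact zero_lt_one
          · exact absurd h (pow_ne_zero _ hξ0)
        · have hdlt : g.degree < f.num.degree := by
            apply degree_sub_lt ?_ hnum ?_
            · rw [degree_C_mul hL0, heq]
            · rw [leadingCoeff_mul, leadingCoeff_C, hL,
                div_mul_cancel₀ _ (leadingCoeff_ne_zero.2 hden)]
          have hndlt : g.natDegree < f.denom.natDegree := by
            have := (natDegree_lt_natDegree_iff hgz).2 hdlt
            have h2 : f.num.natDegree = f.denom.natDegree := by
              rw [degree_eq_natDegree hnum, degree_eq_natDegree hden] at heq
              exact_mod_cast heq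
            omega
          rw [← hgdef, hpow _ hgz] at hkey
          exact aux_lt_one hkey (pow_lt_pow_right₀ hX hndlt)
end

section
/- Let 𝒢 be a finite subset of a group G. The identity element of G lies in the semigroup generated by 𝒢 if and only if some non-empty subset C ⊆ 𝒢 generates (as a semigroup) a subgroup of G. -/
private lemma exists_list_of_mem_sclosure {G : Type*} [Monoid G] {s : Set G} {x : G}
    (hx : x ∈ Subsemigroup.closure s) :
    ∃ l : List G, l ≠ [] ∧ (∀ y ∈ l, y ∈ s) ∧ l.prod = x := by
  induction hx using Subsemigroup.closure_induction with
  | mem y hy => exact ⟨[y], List.cons_ne_nil _ _, by simpa using hy, by simp⟩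
  | mul a b _ _ ha hb =>
    obtain ⟨l1, h1, hm1, hp1⟩ := ha
    obtain ⟨l2, h2, hm2, hp2⟩ := hb
    exact ⟨l1 ++ l2, by simp [h1], by
      intro y hy; rcases List.mem_append.mp hy with h | h
      exacts [hm1 y h, hm2 y h], by simp [hp1, hp2]⟩

private lemma prod_mem_sclosure {G : Type*} [Monoid G] {s : Set G} {l : List G}
    (hl : l ≠ []) (hm : ∀ y ∈ l, y ∈ s) : l.prod ∈ Subsemigroup.closure s := by
  induction l with
  | nil => exact absurd rfl hl
  | cons a t ih =>
    rcases eq_or_ne t [] with rfl | ht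
    · simpa using Subsemigroup.subset_closure (hm a (by simp))
    · rw [List.prod_cons]
      exact mul_mem (Subsemigroup.subset_closure (hm a (by simp)))
        (ih ht fun y hy => hm y (List.mem_cons_of_mem _ hy))

/-- The identity of a group lies in the semigroup generated by a finite set 𝒢 iff
some non-empty subset C of 𝒢 generates (as a semigroup) a subgroup. -/
theorem stmt17 (G : Type*) [Group G] (𝒢 : Finset G) :
    (1 : G) ∈ Subsemigroup.closure (𝒢 : Set G) ↔
    ∃ C : Finset G, C ⊆ 𝒢 ∧ C.Nonempty ∧
      ∀ x ∈ Subsemigroup.closure (C : Set G),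
        x⁻¹ ∈ Subsemigroup.closure (C : Set G) := by
  classical
  constructor
  · intro hone
    obtain ⟨l, hne, hmem, hprod⟩ := exists_list_of_mem_sclosure hone
    refine ⟨l.toFinset, ?_, ?_, ?_⟩
    · intro x hx
      exact hmem x (List.mem_toFinset.mp hx)
    · exact List.toFinset_nonempty_iff _ |>.mpr hne
    · have key : ∀ a ∈ l, a⁻¹ ∈ Subsemigroup.closure (l.toFinset : Set G) := by
        intro a ha
        obtain ⟨l1, l2, rfl⟩ := List.append_of_mem ha
        have h1 : l1.prod * (a * l2.prod) = 1 := by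
          rw [List.prod_append, List.prod_cons] at hprod; exact hprod
        have h2 : a * l2.prod = l1.prod⁻¹ := eq_inv_of_mul_eq_one_right h1
        have ha' : a = l1.prod⁻¹ * l2.prod⁻¹ := by rw [← h2]; group
        have hainv : a⁻¹ = (l2 ++ l1).prod := by
          rw [List.prod_append, ha']; group
        rcases eq_or_ne (l2 ++ l1) [] with hnil | hnil
        · have ha1 : a = 1 := by rw [← inv_eq_one, hainv, hnil, List.prod_nil]
          rw [hainv, hnil, List.prod_nil, ← ha1]
          exact Subsemigroup.subset_closure (by exact_mod_cast List.mem_toFinset.mpr ha)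
        · rw [hainv]
          refine prod_mem_sclosure hnil ?_
          intro y hy
          have hy' : y ∈ l1 ++ a :: l2 := by
            rcases List.mem_append.mp hy with h | h
            · exact List.mem_append.mpr (Or.inr (List.mem_cons_of_mem _ h))
            · exact List.mem_append.mpr (Or.inl h)
          exact_mod_cast List.mem_toFinset.mpr hy'
      intro x hx
      induction hx using Subsemigroup.closure_induction with
      | mem y hy => exact key y (List.mem_toFinset.mp (by exact_mod_cast hy))
      | mul a b ha hb iha ihb =>
        rw [mul_inv_rev]; exact mul_mem ihb iha
  · rintro ⟨C, hCsub, ⟨c, hc⟩, hinv⟩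
    have hc' : c ∈ Subsemigroup.closure (C : Set G) :=
      Subsemigroup.subset_closure (by exact_mod_cast hc)
    have : (1 : G) ∈ Subsemigroup.closure (C : Set G) := by
      simpa using mul_mem hc' (hinv c hc')
    exact Subsemigroup.closure_mono (by exact_mod_cast hCsub) this
end
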